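/- Define $I_1(q) = \sum_{d=1}^{\infty} q^d \frac{(3d)!}{(d!)^3}\left(\sum_{m=d+1}^{3d} \frac{3}{m}\right)$ and $I_0(q) = \sum_{d=0}^{\infty} \frac{(3d)!}{(d!)^3} q^d$. Then the series $x(q) = q\, e^{I_1(q)/I_0(q)}$ satisfies the differential equation $q\frac{dx}{dq} = \frac{L^3}{I_0^2}\, x$, where $L = (1-27q)^{-1/3}$, and the statement $I_{1,1} = L^3/I_0^2$ holds where $I_{1,1} = 1 + q\frac{d}{dq}\frac{I_1}{I_0}$. -/

import Mathlib

open PowerSeries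

/-- The logarithmic derivative operator `D = q d/dq` on formal power series. -/
noncomputable def logD (f : PowerSeries ℚ) : PowerSeries ℚ :=
  PowerSeries.X * PowerSeries.derivative ℚ f

/-- `I₀(q) = ∑_{d≥0} (3d)!/(d!)³ qᵈ`. -/
noncomputable def I0 : PowerSeries ℚ :=
  PowerSeries.mk fun d => ((3 * d).factorial : ℚ) / ((d.factorial : ℚ)) ^ 3

/-- `I₁(q) = ∑_{d≥1} qᵈ (3d)!/(d!)³ (∑_{m=d+1}^{3d} 3/m)`. -/
noncomputable def I1 : PowerSeries ℚ :=
  PowerSeries.mk fun d =>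
    ((3 * d).factorial : ℚ) / ((d.factorial : ℚ)) ^ 3 *
      ∑ m ∈ Finset.Icc (d + 1) (3 * d), (3 : ℚ) / (m : ℚ)

/-! ### Coefficient-level lemmas -/

/-- The coefficient `(3d)!/(d!)³` of `I₀`. -/
noncomputable def aa (d : ℕ) : ℚ := ((3 * d).factorial : ℚ) / ((d.factorial : ℚ)) ^ 3

/-- The harmonic-type sum `∑_{m=d+1}^{3d} 3/m`. -/
noncomputable def SS (d : ℕ) : ℚ := ∑ m ∈ Finset.Icc (d + 1) (3 * d), (3 : ℚ) / (m : ℚ)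

lemma aRec (d : ℕ) : ((d : ℚ) + 1) ^ 2 * aa (d + 1) = 3 * (3 * d + 1) * (3 * d + 2) * aa d := by
  unfold aa
  rw [show 3 * (d + 1) = 3 * d + 1 + 1 + 1 by ring]
  simp only [Nat.factorial_succ]
  have hd : ((d.factorial : ℚ)) ≠ 0 := Nat.cast_ne_zero.2 d.factorial_ne_zero
  have hd1 : ((d : ℚ) + 1) ≠ 0 := by positivity
  push_cast
  field_simp
  ring

lemma Ssum (d : ℕ) : SS d = (∑ m ∈ Finset.Ioc 0 (3 * d), (3 : ℚ) / m) -
    ∑ m ∈ Finset.Ioc 0 d, (3 : ℚ) / m := by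
  unfold SS
  rw [← Finset.sum_Ioc_consecutive _ (Nat.zero_le d) (by omega : d ≤ 3 * d),
    Finset.Icc_add_one_left_eq_Ioc]
  ring

lemma SRec (d : ℕ) : SS (d + 1) = SS d + 3 / (3 * (d : ℚ) + 1) + 3 / (3 * (d : ℚ) + 2)
    + 3 / (3 * (d : ℚ) + 3) - 3 / ((d : ℚ) + 1) := by
  rw [Ssum, Ssum]
  rw [show 3 * (d + 1) = 3 * d + 1 + 1 + 1 by ring]
  rw [Finset.sum_Ioc_succ_top (by omega), Finset.sum_Ioc_succ_top (by omega),
    Finset.sum_Ioc_succ_top (by omega), Finset.sum_Ioc_succ_top (Nat.zero_le d)]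
  push_cast
  ring

lemma bRec (d : ℕ) : ((d : ℚ) + 1) ^ 2 * (aa (d + 1) * SS (d + 1)) =
    3 * (3 * d + 1) * (3 * d + 2) * (aa d * SS d)
      - 2 * ((d : ℚ) + 1) * aa (d + 1) + (54 * d + 27) * aa d := by
  have h1 := aRec d
  have hd1 : ((d : ℚ) + 1) ≠ 0 := by positivity
  have ha1 : aa (d + 1) = 3 * (3 * (d : ℚ) + 1) * (3 * d + 2) * aa d / ((d : ℚ) + 1) ^ 2 := by
    rw [eq_div_iff (by positivity)]
    linear_combination h1
  rw [SRec, ha1]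
  have h2 : (3 * (d : ℚ) + 1) ≠ 0 := by positivity
  have h3 : (3 * (d : ℚ) + 2) ≠ 0 := by positivity
  have h4 : (3 * (d : ℚ) + 3) ≠ 0 := by positivity
  field_simp
  ring

/-! ### Basic properties of `logD` -/

lemma coeff_zero_X_mul (f : PowerSeries ℚ) : coeff 0 (X * f) = 0 := by
  rw [coeff_zero_eq_constantCoeff, map_mul, constantCoeff_X, zero_mul]

lemma coeff_logD (f : PowerSeries ℚ) (n : ℕ) :
    coeff n (logD f) = (n : ℚ) * coeff n f := by
  cases n with
  | zero => simp [logD, coeff_zero_X_mul]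
  | succ m => rw [logD, coeff_succ_X_mul, coeff_derivative]; push_cast; ring

lemma logD_mul (f g : PowerSeries ℚ) : logD (f * g) = logD f * g + f * logD g := by
  unfold logD
  rw [Derivation.leibniz, smul_eq_mul, smul_eq_mul]
  ring

lemma logD_add (f g : PowerSeries ℚ) : logD (f + g) = logD f + logD g := by
  unfold logD; rw [map_add]; ring

lemma logD_sub (f g : PowerSeries ℚ) : logD (f - g) = logD f - logD g := by
  unfold logD; rw [map_sub]; ring

lemma logD_one : logD 1 = 0 := by simp [logD]

lemma logD_sq (f : PowerSeries ℚ) : logD (f ^ 2) = 2 * f * logD f := by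
  rw [sq, logD_mul]; ring

lemma logD_C_mul (c : ℚ) (f : PowerSeries ℚ) : logD (C c * f) = C c * logD f := by
  unfold logD
  rw [Derivation.leibniz, smul_eq_mul, smul_eq_mul, derivative_C]
  ring

lemma logD_const : logD (1 - 27 * X) = -(27 * X) := by
  rw [logD_sub, logD_one, show (27 : PowerSeries ℚ) * X = C 27 * X by
    rw [map_ofNat], logD_C_mul]
  unfold logD
  rw [derivative_X, mul_one, map_ofNat]
  ring

lemma constantCoeff_logD (f : PowerSeries ℚ) : constantCoeff (logD f) = 0 := by
  rw [← coeff_zero_eq_constantCoeff_apply, coeff_logD]; simp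

lemma constantCoeff_I0 : constantCoeff I0 = 1 := by
  rw [← coeff_zero_eq_constantCoeff_apply, I0, coeff_mk]
  norm_num

lemma coeff_I0 (n : ℕ) : coeff n I0 = aa n := by rw [I0, coeff_mk]; rfl
lemma coeff_I1 (n : ℕ) : coeff n I1 = aa n * SS n := by rw [I1, coeff_mk]; rfl

/-! ### The Picard–Fuchs equations for `I₀` and `I₁` -/

lemma pfA : logD (logD I0) =
    C 27 * (X * logD (logD I0)) + C 27 * (X * logD I0) + C 6 * (X * I0) := by
  ext n
  simp only [map_add, coeff_C_mul]
  cases n with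
  | zero => simp [coeff_logD, coeff_zero_X_mul]
  | succ m =>
    simp only [coeff_succ_X_mul, coeff_logD, coeff_I0]
    push_cast
    linear_combination aRec m

lemma pfB : logD (logD I1) =
    C 27 * (X * logD (logD I1)) + C 27 * (X * logD I1) + C 6 * (X * I1)
      - C 2 * logD I0 + C 54 * (X * logD I0) + C 27 * (X * I0) := by
  ext n
  simp only [map_add, map_sub, coeff_C_mul]
  cases n with
  | zero => simp [coeff_logD, coeff_zero_X_mul]
  | succ m =>
    simp only [coeff_succ_X_mul, coeff_logD, coeff_I0, coeff_I1]
    push_cast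
    linear_combination bRec m

/-! ### The Zinger–Zagier identity -/

lemma key : (1 - 27 * X) * (I0 ^ 2 + logD I1 * I0 - I1 * logD I0) = 1 := by
  set F : PowerSeries ℚ := I0 ^ 2 + logD I1 * I0 - I1 * logD I0 with hFdef
  have hA : logD (logD I0) =
      27 * (X * logD (logD I0)) + 27 * (X * logD I0) + 6 * (X * I0) := by
    simpa only [map_ofNat] using pfA
  have hB : logD (logD I1) =
      27 * (X * logD (logD I1)) + 27 * (X * logD I1) + 6 * (X * I1)
        - 2 * logD I0 + 54 * (X * logD I0) + 27 * (X * I0) := by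
    simpa only [map_ofNat] using pfB
  have hF : logD F = 2 * I0 * logD I0 + (logD (logD I1) * I0 + logD I1 * logD I0)
      - (logD I1 * logD I0 + I1 * logD (logD I0)) := by
    rw [hFdef, logD_sub, logD_add, logD_sq, logD_mul, logD_mul]
  have hzero : logD ((1 - 27 * X) * F) = 0 := by
    rw [logD_mul, logD_const, hF]
    linear_combination I0 * hB - I1 * hA
  have hc : constantCoeff ((1 - 27 * X) * F) = 1 := by
    rw [map_mul, map_sub, map_mul, hFdef, map_sub, map_add, map_pow, map_mul, map_mul]
    simp [constantCoeff_logD, constantCoeff_I0, constantCoeff_X]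
  ext n
  cases n with
  | zero =>
    rw [coeff_zero_eq_constantCoeff_apply, coeff_zero_eq_constantCoeff_apply, hc, map_one]
  | succ m =>
    have h := congrArg (coeff (m + 1)) hzero
    rw [coeff_logD, map_zero] at h
    have hm : ((m + 1 : ℕ) : ℚ) ≠ 0 := by positivity
    have h0 := (mul_eq_zero.1 h).resolve_left hm
    rw [h0, coeff_one]
    simp

/-- let `g = exp(I₁/I₀)`, characterized (uniquely) by `g(0) = 1` and
`g' = (I₁/I₀)' g`.  Then `x = q g = q e^{I₁/I₀}` satisfies `q dx/dq = (L³/I₀²) x`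
with `L = (1-27q)^{-1/3}`, and the Zinger–Zagier relation
`I_{1,1} = 1 + q d/dq (I₁/I₀) = L³/I₀²` holds. -/
theorem mirror_map_ODE (L g : PowerSeries ℚ)
    (hL : L ^ 3 * (1 - 27 * PowerSeries.X) = 1)
    (hL0 : PowerSeries.constantCoeff L = 1)
    (hg0 : PowerSeries.constantCoeff g = 1)
    (hg : PowerSeries.derivative ℚ g = PowerSeries.derivative ℚ (I1 * I0⁻¹) * g) :
    logD (PowerSeries.X * g) = (L ^ 3 * (I0⁻¹) ^ 2) * (PowerSeries.X * g) ∧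
    1 + logD (I1 * I0⁻¹) = L ^ 3 * (I0⁻¹) ^ 2 := by
  have hinv : I0 * I0⁻¹ = 1 :=
    PowerSeries.mul_inv_cancel I0 (by rw [constantCoeff_I0]; norm_num)
  have hd1 : logD (I0 * I0⁻¹) = 0 := by
    rw [hinv]; unfold logD; simp
  have hdinv : logD (I0⁻¹) = -logD I0 * I0⁻¹ * I0⁻¹ := by
    rw [logD_mul] at hd1
    linear_combination I0⁻¹ * hd1 - (logD I0⁻¹) * hinv
  have hu : logD (I1 * I0⁻¹) = logD I1 * I0⁻¹ - I1 * logD I0 * I0⁻¹ * I0⁻¹ := by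
    rw [logD_mul, hdinv]; ring
  have part2 : 1 + logD (I1 * I0⁻¹) = L ^ 3 * (I0⁻¹) ^ 2 := by
    rw [hu]
    linear_combination (-(1 + I0 * I0⁻¹ + logD I1 * I0⁻¹)) * hinv
      - ((I0⁻¹) ^ 2 * (I0 ^ 2 + logD I1 * I0 - I1 * logD I0)) * hL
      + (L ^ 3 * (I0⁻¹) ^ 2) * key
  refine ⟨?_, part2⟩
  rw [← part2]
  unfold logD
  rw [Derivation.leibniz, smul_eq_mul, smul_eq_mul, derivative_X, hg]
  ring
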